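/- For x ∈ {0,1}^m with Hamming weight h(x) = a ≥ 1, n ≥ m, and 0 ≤ c ≤ n−m, the number of y ∈ {0,1}^n containing x as a subsequence with Hamming weight a + c equals the sum over p from a to a + z of binomial(p−1, a−1) · binomial(n−p, c), where z = n − m − c. -/

import Mathlib

open Finset

/-- All binary lists of length `n`. -/
def BL : ℕ → Finset (List Bool)
  | 0 => {[]}
  | n + 1 => ((BL n).image (List.cons true)) ∪ ((BL n).image (List.cons false))

lemma mem_BL : ∀ {n : ℕ} {y : List Bool}, y ∈ BL n ↔ y.length = n := by
  intro n
  induction n with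
  | zero => intro y; simp [BL, List.length_eq_zero_iff]
  | succ n ih =>
    intro y
    simp only [BL, Finset.mem_union, Finset.mem_image]
    constructor
    · rintro (⟨z, hz, rfl⟩ | ⟨z, hz, rfl⟩) <;> simp [ih.1 hz]
    · intro hy
      cases y with
      | nil => simp at hy
      | cons b t =>
        have ht : t ∈ BL n := ih.2 (by simpa using hy)
        cases b
        · exact Or.inr ⟨t, ht, rfl⟩
        · exact Or.inl ⟨t, ht, rfl⟩

lemma BL_split (n : ℕ) (P : List Bool → Prop) [DecidablePred P] :
    ((BL (n+1)).filter P).card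
      = ((BL n).filter (fun y => P (true :: y))).card
        + ((BL n).filter (fun y => P (false :: y))).card := by
  have hinj : ∀ b : Bool, Function.Injective (List.cons b) := by
    intro b y z h; simpa using h
  have hu : (BL (n+1)).filter P
      = ((BL n).filter (fun y => P (true :: y))).image (List.cons true)
        ∪ ((BL n).filter (fun y => P (false :: y))).image (List.cons false) := by
    show (((BL n).image (List.cons true)) ∪ ((BL n).image (List.cons false))).filter P = _
    rw [Finset.filter_union, Finset.filter_image, Finset.filter_image]
  rw [hu, Finset.card_union_of_disjoint, Finset.card_image_of_injective _ (hinj true),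
    Finset.card_image_of_injective _ (hinj false)]
  rw [Finset.disjoint_left]
  rintro y hy hy'
  simp only [Finset.mem_image] at hy hy'
  obtain ⟨z, -, rfl⟩ := hy
  obtain ⟨z', -, h⟩ := hy'
  simp at h

/-- Number of `y` of length `n`, weight `w`, containing `x` as a subsequence. -/
def gB (n : ℕ) (x : List Bool) (w : ℕ) : ℕ :=
  ((BL n).filter (fun y => x.Sublist y ∧ y.count true = w)).card

lemma cons_sublist_cons_ne {b c : Bool} {x y : List Bool} (h : b ≠ c) :
    (b :: x).Sublist (c :: y) ↔ (b :: x).Sublist y := by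
  constructor
  · intro hs
    cases hs with
    | cons _ hs => exact hs
    | cons_cons => exact absurd rfl h
  · intro hs; exact hs.cons c

lemma gB_zero {x : List Bool} (hx : x ≠ []) (w : ℕ) : gB 0 x w = 0 := by
  unfold gB
  rw [Finset.card_eq_zero, Finset.filter_eq_empty_iff]
  intro y hy
  rw [mem_BL, List.length_eq_zero_iff] at hy
  subst hy
  rw [List.sublist_nil]
  tauto

lemma gB_cons_true (n : ℕ) (x : List Bool) (w : ℕ) :
    gB (n+1) (true :: x) w
      = (if w = 0 then 0 else gB n x (w-1)) + gB n (true :: x) w := by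
  unfold gB
  rw [BL_split]
  congr 1
  · cases w with
    | zero =>
      rw [if_pos rfl, Finset.card_eq_zero, Finset.filter_eq_empty_iff]
      intro y _
      simp [List.count_cons_self]
    | succ w =>
      rw [if_neg (Nat.succ_ne_zero w), Nat.add_sub_cancel]
      apply Finset.card_nbij' id id <;> intro y hy <;>
        simp_all [List.cons_sublist_cons, List.count_cons_self]
  · apply Finset.card_nbij' id id <;> intro y hy <;>
      simp_all [cons_sublist_cons_ne (show true ≠ false by decide),
        List.count_cons_of_ne (show true ≠ false by decide)]

lemma gB_cons_false (n : ℕ) (x : List Bool) (w : ℕ) :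
    gB (n+1) (false :: x) w
      = (if w = 0 then 0 else gB n (false :: x) (w-1)) + gB n x w := by
  unfold gB
  rw [BL_split]
  congr 1
  · cases w with
    | zero =>
      rw [if_pos rfl, Finset.card_eq_zero, Finset.filter_eq_empty_iff]
      intro y _
      simp [List.count_cons_self]
    | succ w =>
      rw [if_neg (Nat.succ_ne_zero w), Nat.add_sub_cancel]
      apply Finset.card_nbij' id id <;> intro y hy <;>
        simp_all [cons_sublist_cons_ne (show false ≠ true by decide),
          List.count_cons_self]
  · apply Finset.card_nbij' id id <;> intro y hy <;>
      simp_all [List.cons_sublist_cons,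
        List.count_cons_of_ne (show true ≠ false by decide)]

lemma gB_reverse (n : ℕ) (x : List Bool) (w : ℕ) :
    gB n x w = gB n x.reverse w := by
  unfold gB
  apply Finset.card_nbij' List.reverse List.reverse
  · intro y hy
    rw [Finset.mem_coe, Finset.mem_filter, mem_BL] at hy ⊢
    obtain ⟨h1, h2, h3⟩ := hy
    exact ⟨by simp [h1], List.reverse_sublist.mpr h2,
      by rw [List.count_reverse]; exact h3⟩
  · intro y hy
    rw [Finset.mem_coe, Finset.mem_filter, mem_BL] at hy ⊢
    obtain ⟨h1, h2, h3⟩ := hy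
    refine ⟨by simp [h1], ?_, by rw [List.count_reverse]; exact h3⟩
    have := List.reverse_sublist.mpr h2
    simpa using this
  · intro y _; simp
  · intro y _; simp

lemma gB_concat_false (n : ℕ) (x : List Bool) (w : ℕ) :
    gB (n+1) (x ++ [false]) w
      = (if w = 0 then 0 else gB n (x ++ [false]) (w-1)) + gB n x w := by
  have hrev : (x ++ [false]).reverse = false :: x.reverse := by simp
  rw [gB_reverse (n+1), hrev, gB_cons_false, ← hrev, ← gB_reverse, ← gB_reverse]

lemma card_weight (n w : ℕ) :
    ((BL n).filter (fun y => y.count true = w)).card = n.choose w := by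
  induction n generalizing w with
  | zero =>
    cases w with
    | zero => simp [BL, Finset.filter_singleton]
    | succ w => simp [BL, Finset.filter_singleton]
  | succ n ih =>
    rw [BL_split]
    cases w with
    | zero =>
      have h0 : ((BL n).filter (fun y => (true :: y).count true = 0)).card = 0 := by
        rw [Finset.card_eq_zero, Finset.filter_eq_empty_iff]
        intro y _; simp [List.count_cons_self]
      have h1 : ((BL n).filter (fun y => (false :: y).count true = 0))
          = (BL n).filter (fun y => y.count true = 0) :=
        Finset.filter_congr (by
          intro y _; simp [List.count_cons_of_ne (show true ≠ false by decide)])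
      rw [h0, h1, ih 0]; simp
    | succ w =>
      have h1 : ((BL n).filter (fun y => (true :: y).count true = w+1))
          = (BL n).filter (fun y => y.count true = w) :=
        Finset.filter_congr (by intro y _; simp [List.count_cons_self])
      have h2 : ((BL n).filter (fun y => (false :: y).count true = w+1))
          = (BL n).filter (fun y => y.count true = w+1) :=
        Finset.filter_congr (by
          intro y _; simp [List.count_cons_of_ne (show true ≠ false by decide)])
      rw [h1, h2, ih w, ih (w+1), Nat.choose_succ_succ]

lemma gB_one (n w : ℕ) : gB n [true] w = if w = 0 then 0 else n.choose w := by
  unfold gB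
  cases w with
  | zero =>
    rw [if_pos rfl, Finset.card_eq_zero, Finset.filter_eq_empty_iff]
    intro y _
    rw [List.singleton_sublist]
    rintro ⟨h1, h2⟩
    rw [← List.count_pos_iff] at h1
    omega
  | succ w =>
    rw [if_neg (Nat.succ_ne_zero w)]
    have hfc : ((BL n).filter (fun y => [true].Sublist y ∧ y.count true = w+1))
        = (BL n).filter (fun y => y.count true = w+1) :=
      Finset.filter_congr (by
        intro y _
        simp only [List.singleton_sublist]
        constructor
        · rintro ⟨-, h⟩; exact h
        · intro h; exact ⟨by rw [← List.count_pos_iff]; omega, h⟩)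
    rw [hfc, card_weight]

/-- Canonical string `1^a 0^s`. -/
def canS (a s : ℕ) : List Bool := List.replicate a true ++ List.replicate s false

lemma canS_count (a s : ℕ) : (canS a s).count true = a := by
  simp [canS, List.count_replicate]

lemma canS_length (a s : ℕ) : (canS a s).length = a + s := by simp [canS]

lemma canS_succ_left (a s : ℕ) : canS (a+1) s = true :: canS a s := by
  simp [canS, List.replicate_succ]

lemma canS_succ_right (a s : ℕ) : canS a (s+1) = canS a s ++ [false] := by
  simp [canS, List.replicate_succ']

lemma canS_ne_nil {a s : ℕ} (h : 1 ≤ a + s) : canS a s ≠ [] := by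
  intro hn
  have hl := canS_length a s
  rw [hn, List.length_nil] at hl
  omega

/-- Reduction to the canonical string. -/
lemma gB_canonical : ∀ (n : ℕ) (x : List Bool) (w : ℕ),
    gB n x w = gB n (canS (x.count true) (x.length - x.count true)) w := by
  intro n
  induction n with
  | zero =>
    intro x w
    cases x with
    | nil => simp [canS]
    | cons b t =>
      rw [gB_zero (by simp) w, gB_zero _ w]
      apply canS_ne_nil
      have h1 := List.count_le_length (a := true) (l := b :: t)
      have h2 : (b :: t).length = t.length + 1 := rfl
      omega
  | succ n ih =>
    intro x w
    cases x with
    | nil => simp [canS]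
    | cons b t =>
      have hct : t.count true ≤ t.length := List.count_le_length (a := true) (l := t)
      cases b with
      | true =>
        have hcount : (true :: t).count true = t.count true + 1 :=
          List.count_cons_self (a := true) (l := t)
        have hlen : (true :: t).length - (t.count true + 1)
            = t.length - t.count true := by
          simp only [List.length_cons]; omega
        rw [hcount, hlen, canS_succ_left, gB_cons_true, gB_cons_true]
        congr 1
        · cases w with
          | zero => rfl
          | succ w =>
            rw [if_neg (Nat.succ_ne_zero w), if_neg (Nat.succ_ne_zero w),
              Nat.add_sub_cancel]
            exact ih t w
        · have h := ih (true :: t) w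
          rw [hcount, hlen, canS_succ_left] at h
          exact h
      | false =>
        have hcount : (false :: t).count true = t.count true :=
          List.count_cons_of_ne (a := true) (b := false) (by decide) (l := t)
        have hlen : (false :: t).length - t.count true
            = (t.length - t.count true) + 1 := by
          simp only [List.length_cons]; omega
        rw [hcount, hlen, canS_succ_right, gB_cons_false, gB_concat_false]
        congr 1
        · cases w with
          | zero => rfl
          | succ w =>
            rw [if_neg (Nat.succ_ne_zero w), if_neg (Nat.succ_ne_zero w),
              Nat.add_sub_cancel]
            have h := ih (false :: t) w
            rw [hcount, hlen, canS_succ_right] at h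
            exact h
        · exact ih t w

/-- The closed-form expression. -/
def FF (n a s w : ℕ) : ℕ :=
  if w < a then 0
  else ∑ p ∈ Finset.Icc a (n - s - (w - a)), (p-1).choose (a-1) * (n-p).choose (w-a)

lemma FF_zero {a : ℕ} (ha : 1 ≤ a) (s w : ℕ) : FF 0 a s w = 0 := by
  unfold FF
  split
  · rfl
  · rw [Finset.Icc_eq_empty (by omega), Finset.sum_empty]

lemma sum_Icc_shift (f : ℕ → ℕ) (a b : ℕ) :
    ∑ p ∈ Finset.Icc (a+1) (b+1), f p = ∑ p ∈ Finset.Icc a b, f (p+1) := by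
  rw [← Finset.map_add_right_Icc a b 1, Finset.sum_map]
  rfl

lemma sum_Icc_shift' (f : ℕ → ℕ) {a : ℕ} (b : ℕ) (ha : 1 ≤ a) :
    ∑ p ∈ Finset.Icc a (b+1), f p = ∑ p ∈ Finset.Icc (a-1) b, f (p+1) := by
  obtain ⟨a', rfl⟩ : ∃ a', a = a' + 1 := ⟨a-1, by omega⟩
  rw [Nat.add_sub_cancel]
  exact sum_Icc_shift f a' b

lemma FF_s_step (n a s w : ℕ) (ha : 1 ≤ a) :
    FF (n+1) a (s+1) w = (if w = 0 then 0 else FF n a (s+1) (w-1)) + FF n a s w := by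
  rcases Nat.lt_or_ge w a with hw | hw
  · have h0 : FF (n+1) a (s+1) w = 0 := by unfold FF; rw [if_pos hw]
    have h1 : FF n a s w = 0 := by unfold FF; rw [if_pos hw]
    have h2 : FF n a (s+1) (w-1) = 0 := by unfold FF; rw [if_pos (by omega)]
    rw [h0, h1, h2]
    simp
  · have hw0 : w ≠ 0 := by omega
    rw [if_neg hw0]
    rcases Nat.eq_or_lt_of_le hw with heq | hlt
    · -- w = a
      have hmid : FF n a (s+1) (w-1) = 0 := by unfold FF; rw [if_pos (by omega)]
      rw [hmid, Nat.zero_add]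
      unfold FF
      rw [if_neg (by omega), if_neg (by omega)]
      have hr : n + 1 - (s+1) - (w - a) = n - s - (w - a) := by omega
      rw [hr]
      apply Finset.sum_congr rfl
      intro p hp
      have hwa : w - a = 0 := by omega
      simp [hwa]
    · -- w > a
      have hc1 : 1 ≤ w - a := by omega
      unfold FF
      rw [if_neg (by omega), if_neg (by omega), if_neg (by omega)]
      have hr1 : n + 1 - (s+1) - (w - a) = n - s - (w - a) := by omega
      have hr2 : n - (s+1) - (w - 1 - a) = n - s - (w - a) := by omega
      have hr3 : w - 1 - a = (w - a) - 1 := by omega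
      rw [hr1, hr2, hr3, ← Finset.sum_add_distrib]
      apply Finset.sum_congr rfl
      intro p hp
      rw [Finset.mem_Icc] at hp
      have h1 : n + 1 - p = (n - p) + 1 := by omega
      obtain ⟨k, hk⟩ : ∃ k, w - a = k + 1 := ⟨w - a - 1, by omega⟩
      rw [h1, hk, Nat.add_sub_cancel, Nat.choose_succ_succ, Nat.mul_add]

lemma FF_a_step (n a w : ℕ) (ha : 2 ≤ a) :
    FF (n+1) a 0 w = (if w = 0 then 0 else FF n (a-1) 0 (w-1)) + FF n a 0 w := by
  rcases Nat.lt_or_ge w a with hw | hw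
  · have h0 : FF (n+1) a 0 w = 0 := by unfold FF; rw [if_pos hw]
    have h1 : FF n a 0 w = 0 := by unfold FF; rw [if_pos hw]
    rw [h0, h1]
    rcases Nat.eq_zero_or_pos w with rfl | hwp
    · simp
    · have h2 : FF n (a-1) 0 (w-1) = 0 := by unfold FF; rw [if_pos (by omega)]
      rw [if_neg (by omega), h2]
  · have hw0 : w ≠ 0 := by omega
    rw [if_neg hw0]
    unfold FF
    rw [if_neg (by omega), if_neg (by omega), if_neg (by omega)]
    have hc' : w - 1 - (a - 1) = w - a := by omega
    rcases Nat.lt_or_ge n (w - a) with hnc | hnc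
    · rw [Finset.Icc_eq_empty (by omega), Finset.Icc_eq_empty (by omega),
        Finset.Icc_eq_empty (by omega)]
      simp
    · have hup : n + 1 - 0 - (w - a) = (n - (w - a)) + 1 := by omega
      rw [hup, sum_Icc_shift' (fun p => (p-1).choose (a-1) * (n+1-p).choose (w-a))
        (n - (w - a)) (by omega)]
      simp only [Nat.add_sub_cancel]
      have hsum : ∀ p ∈ Finset.Icc (a-1) (n - (w - a)),
          p.choose (a-1) * (n+1-(p+1)).choose (w-a)
            = (p-1).choose (a-1-1) * (n-p).choose (w-a)
              + (p-1).choose (a-1) * (n-p).choose (w-a) := by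
        intro p hp
        rw [Finset.mem_Icc] at hp
        have e1 : n + 1 - (p+1) = n - p := by omega
        obtain ⟨q, hq⟩ : ∃ q, p = q + 1 := ⟨p - 1, by omega⟩
        obtain ⟨b, hb⟩ : ∃ b, a - 1 = b + 1 := ⟨a - 2, by omega⟩
        rw [e1, hq, hb, Nat.add_sub_cancel, Nat.add_sub_cancel,
          Nat.choose_succ_succ, Nat.add_mul]
      rw [Finset.sum_congr rfl hsum, Finset.sum_add_distrib]
      congr 1
      · rw [hc', (by omega : n - 0 - (w - a) = n - (w - a))]
      · rcases Nat.lt_or_ge (n - (w - a)) (a - 1) with hlt | hge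
        · rw [Finset.Icc_eq_empty (by omega), Finset.Icc_eq_empty (by omega)]
        · have hins : Finset.Icc (a-1) (n - (w - a))
              = insert (a-1) (Finset.Icc a (n - (w - a))) := by
            ext q
            simp only [Finset.mem_Icc, Finset.mem_insert]
            omega
          rw [hins, Finset.sum_insert (by simp only [Finset.mem_Icc]; omega)]
          have hz : ((a-1)-1).choose (a-1) = 0 :=
            Nat.choose_eq_zero_of_lt (by omega)
          rw [hz, Nat.zero_mul, Nat.zero_add,
            (by omega : n - 0 - (w - a) = n - (w - a))]

lemma FF_one (n w : ℕ) : FF n 1 0 w = if w = 0 then 0 else n.choose w := by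
  unfold FF
  cases w with
  | zero => simp
  | succ w =>
    rw [if_neg (by omega), if_neg (by omega)]
    have hc : w + 1 - 1 = w := by omega
    rw [hc, Nat.sub_self]
    have h1 : ∀ p ∈ Finset.Icc 1 (n - 0 - w), (p-1).choose 0 * (n-p).choose w
        = (n-p).choose w := by
      intro p hp; simp
    rw [Finset.sum_congr rfl h1, (by omega : n - 0 - w = n - w)]
    rcases Nat.lt_or_ge n (w+1) with hn | hn
    · rw [Finset.Icc_eq_empty (by omega), Finset.sum_empty,
        Nat.choose_eq_zero_of_lt hn]
    · have hhs := Nat.sum_Icc_choose (n-1) w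
      rw [(by omega : (n-1)+1 = n)] at hhs
      rw [← hhs]
      apply Finset.sum_nbij' (fun p => n - p) (fun q => n - q)
      · intro p hp; rw [Finset.mem_Icc] at *; omega
      · intro q hq; rw [Finset.mem_Icc] at *; omega
      · intro p hp; rw [Finset.mem_Icc] at hp; omega
      · intro q hq; rw [Finset.mem_Icc] at hq; omega
      · intro p hp; rfl

lemma gB_canS_eq_FF : ∀ (n a s w : ℕ), 1 ≤ a → gB n (canS a s) w = FF n a s w := by
  intro n
  induction n with
  | zero =>
    intro a s w ha
    rw [gB_zero (canS_ne_nil (by omega)) w, FF_zero ha]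
  | succ n ih =>
    intro a s w ha
    cases s with
    | succ s =>
      rw [canS_succ_right, gB_concat_false, ← canS_succ_right, FF_s_step n a s w ha]
      congr 1
      · cases w with
        | zero => rfl
        | succ w =>
          rw [if_neg (Nat.succ_ne_zero w), if_neg (Nat.succ_ne_zero w),
            Nat.add_sub_cancel]
          exact ih a (s+1) w ha
      · exact ih a s w ha
    | zero =>
      match a, ha with
      | 1, _ =>
        have h1 : canS 1 0 = [true] := by simp [canS]
        rw [h1, gB_one, FF_one]
      | (a+2), _ =>
        rw [canS_succ_left, gB_cons_true, ← canS_succ_left,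
          FF_a_step n (a+2) w (by omega)]
        congr 1
        · cases w with
          | zero => rfl
          | succ w =>
            rw [if_neg (Nat.succ_ne_zero w), if_neg (Nat.succ_ne_zero w),
              Nat.add_sub_cancel]
            exact ih (a+1) 0 w (by omega)
        · exact ih (a+2) 0 w (by omega)

/-- Closed form for the size of a cluster: for `x` of length `m` with Hamming weight
`a ≥ 1`, the number of supersequences of length `n` with Hamming weight `a + c` equals
`∑_{p=a}^{a+z} C(p-1, a-1) · C(n-p, c)` where `z = n - m - c`. -/
theorem cluster_card_closed_form (m n c : ℕ) (hmn : m ≤ n) (hc : c ≤ n - m)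
    (x : List Bool) (hx : x.length = m) (ha : 1 ≤ x.count true) :
    Nat.card {y : List Bool // y.length = n ∧ x.Sublist y ∧
        y.count true = x.count true + c} =
      ∑ p ∈ Finset.Icc (x.count true) (x.count true + (n - m - c)),
        (p - 1).choose (x.count true - 1) * (n - p).choose c := by
  have ham : x.count true ≤ m := by rw [← hx]; exact List.count_le_length (a := true) (l := x)
  have hcard : Nat.card {y : List Bool // y.length = n ∧ x.Sublist y ∧
      y.count true = x.count true + c} = gB n x (x.count true + c) := by
    have e : {y : List Bool // y.length = n ∧ x.Sublist y ∧
          y.count true = x.count true + c}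
        ≃ {y // y ∈ (BL n).filter
            (fun y => x.Sublist y ∧ y.count true = x.count true + c)} :=
      Equiv.subtypeEquivRight (by intro y; rw [Finset.mem_filter, mem_BL])
    rw [Nat.card_congr e, Nat.card_eq_finsetCard]
    rfl
  rw [hcard, gB_canonical, hx,
    gB_canS_eq_FF n (x.count true) (m - x.count true) (x.count true + c) ha]
  unfold FF
  rw [if_neg (by omega)]
  have h1 : x.count true + c - x.count true = c := by omega
  have h2 : n - (m - x.count true) - (x.count true + c - x.count true)
      = x.count true + (n - m - c) := by omega
  rw [h2, h1]
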